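/- Let c : ℝⁿ → ℝ^m be differentiable with L_c-Lipschitz Jacobian A(x) = ∇c(x), and let Ã = A(x) + δ_A, c̃ = c(x) + δ_c with ‖δ_A‖ ≤ ε_A, ‖δ_c‖ ≤ ε_c, and suppose ‖δ_c(x+p)‖ ≤ ε_c as well. Then for any p ∈ ℝⁿ, | ( ‖c̃(x)‖ - ‖c̃(x+p)‖ ) - ( ‖c̃(x)‖ - ‖Ãᵀp + c̃(x)‖ ) | ≤ (1/2) L_c ‖p‖² + ε_A‖p‖ + 2ε_c, where c̃(x+p) = c(x+p) + δ_c(x+p). -/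

import Mathlib

set_option maxHeartbeats 1000000

theorem stmt_6 (n m : ℕ)
    (c : EuclideanSpace ℝ (Fin n) → EuclideanSpace ℝ (Fin m))
    (A : EuclideanSpace ℝ (Fin n) → (EuclideanSpace ℝ (Fin n) →L[ℝ] EuclideanSpace ℝ (Fin m)))
    (hA : ∀ x, HasFDerivAt c (A x) x)
    (Lc : ℝ) (hLip : ∀ x y, ‖A x - A y‖ ≤ Lc * ‖x - y‖)
    (x p : EuclideanSpace ℝ (Fin n))
    (δA : EuclideanSpace ℝ (Fin n) →L[ℝ] EuclideanSpace ℝ (Fin m))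
    (εA : ℝ) (hδA : ‖δA‖ ≤ εA)
    (δc δc' : EuclideanSpace ℝ (Fin m)) (εc : ℝ)
    (hδc : ‖δc‖ ≤ εc) (hδc' : ‖δc'‖ ≤ εc)
    (Atil : EuclideanSpace ℝ (Fin n) →L[ℝ] EuclideanSpace ℝ (Fin m))
    (hAtil : Atil = A x + δA)
    (ctx ctxp : EuclideanSpace ℝ (Fin m))
    (hctx : ctx = c x + δc) (hctxp : ctxp = c (x + p) + δc') :
    |(‖ctx‖ - ‖ctxp‖) - (‖ctx‖ - ‖Atil p + ctx‖)| ≤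
      (1/2) * Lc * ‖p‖^2 + εA * ‖p‖ + 2 * εc := by
  have hεc2 : ‖δc - δc'‖ ≤ 2 * εc := by
    calc ‖δc - δc'‖ ≤ ‖δc‖ + ‖δc'‖ := norm_sub_le _ _
    _ ≤ 2 * εc := by linarith
  have hδAp : ‖δA p‖ ≤ εA * ‖p‖ := by
    calc ‖δA p‖ ≤ ‖δA‖ * ‖p‖ := δA.le_opNorm p
    _ ≤ εA * ‖p‖ := by
        apply mul_le_mul_of_nonneg_right hδA (norm_nonneg _)
  -- quadratic Taylor bound
  have key : ‖c (x + p) - c x - A x p‖ ≤ (1/2) * Lc * ‖p‖^2 := by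
    by_cases hp : p = 0
    · simp [hp]
    have hLc : 0 ≤ Lc := by
      have h1 := hLip x (x + p)
      have h2 : (0:ℝ) < ‖x - (x + p)‖ := by
        simp [sub_add_eq_sub_sub, hp]
      nlinarith [norm_nonneg (A x - A (x + p))]
    have hAcont : Continuous A := by
      have : LipschitzWith Lc.toNNReal A := by
        apply LipschitzWith.of_dist_le_mul
        intro a b
        rw [dist_eq_norm, dist_eq_norm]
        calc ‖A a - A b‖ ≤ Lc * ‖a - b‖ := hLip a b
        _ = Lc.toNNReal * ‖a - b‖ := by rw [Real.coe_toNNReal _ hLc]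
      exact this.continuous
    have hg : ∀ t : ℝ, HasDerivAt (fun s : ℝ => c (x + s • p)) (A (x + t • p) p) t := by
      intro t
      have h1 : HasDerivAt (fun s : ℝ => x + s • p) p t := by
        simpa using ((hasDerivAt_id t).smul_const p).const_add x
      exact (hA (x + t • p)).comp_hasDerivAt t h1
    have hcont : Continuous fun t : ℝ => (A (x + t • p)) p := by
      have h2 : Continuous fun B : EuclideanSpace ℝ (Fin n) →L[ℝ] EuclideanSpace ℝ (Fin m) => B p :=
        (ContinuousLinearMap.apply ℝ (EuclideanSpace ℝ (Fin m)) p).continuous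
      exact h2.comp (hAcont.comp (by continuity))
    have hint : ∫ t in (0:ℝ)..1, A (x + t • p) p = c (x + p) - c x := by
      have := intervalIntegral.integral_eq_sub_of_hasDerivAt
        (f := fun s : ℝ => c (x + s • p)) (f' := fun t : ℝ => A (x + t • p) p)
        (a := 0) (b := 1) (fun t _ => hg t) (hcont.intervalIntegrable 0 1)
      simpa using this
    have hconst : ∫ t in (0:ℝ)..1, (A x) p = (A x) p := by simp
    have hdiff : c (x + p) - c x - A x p
        = ∫ t in (0:ℝ)..1, (A (x + t • p) p - A x p) := by
      rw [intervalIntegral.integral_sub (hcont.intervalIntegrable 0 1)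
        (intervalIntegrable_const), hint, hconst]
    rw [hdiff]
    have hbound : ∀ t ∈ Set.Icc (0:ℝ) 1,
        ‖A (x + t • p) p - A x p‖ ≤ Lc * ‖p‖^2 * t := by
      intro t ht
      have : A (x + t • p) p - A x p = (A (x + t • p) - A x) p := by simp
      rw [this]
      calc ‖(A (x + t • p) - A x) p‖ ≤ ‖A (x + t • p) - A x‖ * ‖p‖ :=
            (A (x + t • p) - A x).le_opNorm p
      _ ≤ (Lc * ‖x + t • p - x‖) * ‖p‖ := by
          apply mul_le_mul_of_nonneg_right (hLip _ _) (norm_nonneg _)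
      _ = Lc * ‖p‖^2 * t := by
          have : x + t • p - x = t • p := by abel
          rw [this, norm_smul, Real.norm_eq_abs, abs_of_nonneg ht.1]
          ring
    calc ‖∫ t in (0:ℝ)..1, (A (x + t • p) p - A x p)‖
        ≤ ∫ t in (0:ℝ)..1, ‖A (x + t • p) p - A x p‖ :=
          intervalIntegral.norm_integral_le_integral_norm zero_le_one
    _ ≤ ∫ t in (0:ℝ)..1, Lc * ‖p‖^2 * t := by
        apply intervalIntegral.integral_mono_on zero_le_one
        · exact ((hcont.sub continuous_const).norm).intervalIntegrable 0 1
        · exact (continuous_const.mul continuous_id).intervalIntegrable 0 1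
        · exact hbound
    _ = (1/2) * Lc * ‖p‖^2 := by
        rw [intervalIntegral.integral_const_mul]
        simp
        ring
  have hmain : |(‖ctx‖ - ‖ctxp‖) - (‖ctx‖ - ‖Atil p + ctx‖)|
      = |‖Atil p + ctx‖ - ‖ctxp‖| := by ring_nf
  rw [hmain]
  calc |‖Atil p + ctx‖ - ‖ctxp‖| ≤ ‖(Atil p + ctx) - ctxp‖ := abs_norm_sub_norm_le _ _
  _ = ‖-(c (x + p) - c x - A x p) + δA p + (δc - δc')‖ := by
      rw [hAtil, hctx, hctxp]
      simp only [ContinuousLinearMap.add_apply]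
      congr 1
      abel
  _ ≤ ‖-(c (x + p) - c x - A x p) + δA p‖ + ‖δc - δc'‖ := norm_add_le _ _
  _ ≤ (‖-(c (x + p) - c x - A x p)‖ + ‖δA p‖) + ‖δc - δc'‖ := by
      exact add_le_add_left (norm_add_le _ _) _
  _ ≤ (1/2) * Lc * ‖p‖^2 + εA * ‖p‖ + 2 * εc := by
      rw [norm_neg]
      linarith
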